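/- Let U be an [n,k]_{q^m/q} system (an F_q-subspace of F_{q^m}^k of F_q-dimension n spanning F_{q^m}^k over F_{q^m}). If n ≤ 2k - 2, then U is 2-spannable, i.e., there exist two F_{q^m}-linear hyperplanes H₁, H₂ of F_{q^m}^k such that U = (H₁ ∩ U) + (H₂ ∩ U). -/

import Mathlib

open Module Submodule

variable (Fq : Type*) {L : Type*} [Field Fq] [Field L] [Algebra Fq L]

/-- The rank support of a vector `x ∈ L^n` (L = F_{q^m}, Fq = F_q): the `Fq`-span of the
rows of its coordinate matrix, equivalently the span of all `(f (x 1), …, f (x n))` for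
`Fq`-linear functionals `f : L → Fq`. -/
def rsupp {n : ℕ} (x : Fin n → L) : Submodule Fq (Fin n → Fq) :=
  Submodule.span Fq {v | ∃ f : L →ₗ[Fq] Fq, v = fun j => f (x j)}

/-- The rank (weight) of a vector. -/
noncomputable def rrk {n : ℕ} (x : Fin n → L) : ℕ :=
  Module.finrank Fq (rsupp Fq x)

/-- A linear rank-metric code is intersecting if the supports of any two nonzero
codewords meet nontrivially. -/
def RankIntersecting {n : ℕ} (C : Submodule L (Fin n → L)) : Prop :=
  ∀ c ∈ C, ∀ c' ∈ C, c ≠ 0 → c' ≠ 0 → rsupp Fq c ⊓ rsupp Fq c' ≠ ⊥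

/-- A rank-metric code is nondegenerate if the supports of its codewords span `Fq^n`. -/
def Nondeg {n : ℕ} (C : Submodule L (Fin n → L)) : Prop :=
  (⨆ c ∈ C, rsupp Fq c) = ⊤

/-- An `L`-hyperplane of `L^k`. -/
def IsHyperplane {k : ℕ} (H : Submodule L (Fin k → L)) : Prop :=
  ∃ φ : (Fin k → L) →ₗ[L] L, φ ≠ 0 ∧ H = LinearMap.ker φ

/-- A `q`-system `U` is 2-spannable if it is spanned by its intersections with two
`L`-hyperplanes. -/
def TwoSpannable {k : ℕ} (U : Submodule Fq (Fin k → L)) : Prop :=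
  ∃ H₁ H₂ : Submodule L (Fin k → L), IsHyperplane H₁ ∧ IsHyperplane H₂ ∧
    U = (U ⊓ H₁.restrictScalars Fq) ⊔ (U ⊓ H₂.restrictScalars Fq)

/-- A minimal rank-metric code. -/
def MinimalCode {n : ℕ} (C : Submodule L (Fin n → L)) : Prop :=
  ∀ c ∈ C, ∀ c' ∈ C, rsupp Fq c ≤ rsupp Fq c' → ∃ lam : L, c' = lam • c

/-- an `[n,k]` system with `n ≤ 2k - 2` is 2-spannable. -/
lemma aux_finrank_span_range_le {k m : ℕ} (w : Fin m → (Fin k → L)) :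
    finrank L (Submodule.span L (Set.range w)) ≤ m := by
  classical
  calc finrank L (Submodule.span L (Set.range w))
      ≤ (Set.range w).toFinset.card := finrank_span_le_card _
    _ ≤ m := by
        rw [Set.toFinset_range]
        exact (Finset.card_image_le).trans (by simp)

lemma aux_exists_hyperplane {k : ℕ} (W : Submodule L (Fin k → L))
    (hW : finrank L W < k) : ∃ H, IsHyperplane H ∧ W ≤ H := by
  have hlt : W < ⊤ := by
    rcases lt_or_eq_of_le (le_top : W ≤ ⊤) with h | h
    · exact h
    · exfalso
      rw [h, finrank_top] at hW
      simp [Module.finrank_fin_fun] at hW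
  obtain ⟨φ, hφ, hker⟩ := W.exists_le_ker_of_lt_top hlt
  exact ⟨LinearMap.ker φ, ⟨φ, hφ, rfl⟩, hker⟩
theorem stmt5 [FiniteDimensional Fq L] {k n : ℕ} (U : Submodule Fq (Fin k → L))
    (hn : finrank Fq U = n) (hspan : Submodule.span L (U : Set (Fin k → L)) = ⊤)
    (h : n + 2 ≤ 2 * k) : TwoSpannable Fq U := by
  subst hn
  set n := finrank Fq U with hndef
  -- a spanning family of U indexed by Fin n
  let b := finBasis Fq U
  let v : Fin n → (Fin k → L) := fun j => (b j : Fin k → L)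
  have hvU : ∀ j, v j ∈ U := fun j => (b j).2
  have hvspan : Submodule.span Fq (Set.range v) = U := by
    have : Set.range v = U.subtype '' Set.range b := by
      rw [← Set.range_comp]; rfl
    rw [this, ← Submodule.map_span, b.span_eq, Submodule.map_top, Submodule.range_subtype]
  -- split the index
  set n₁ := min n (k - 1) with hn₁
  set n₂ := n - n₁ with hn₂
  have hk : 1 ≤ k := by omega
  have h₁le : n₁ ≤ n := min_le_left _ _
  have h₁lt : n₁ < k := by omega
  have h₂lt : n₂ < k := by omega
  let v₁ : Fin n₁ → (Fin k → L) := fun i => v (Fin.castLE h₁le i)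
  let v₂ : Fin n₂ → (Fin k → L) := fun i => v ⟨n₁ + ↑i, by omega⟩
  have hcover : ∀ j : Fin n, v j ∈ Set.range v₁ ∪ Set.range v₂ := by
    intro j
    by_cases hj : (j : ℕ) < n₁
    · left
      exact ⟨⟨j, hj⟩, congrArg v (Fin.ext rfl)⟩
    · right
      refine ⟨⟨(j : ℕ) - n₁, by omega⟩, ?_⟩
      have heq : (⟨n₁ + ((j : ℕ) - n₁), by omega⟩ : Fin n) = j := Fin.ext (by simp only [Fin.val_mk]; omega)
      exact congrArg v heq
  -- hyperplanes
  obtain ⟨H₁, hH₁, hW₁⟩ := aux_exists_hyperplane (Submodule.span L (Set.range v₁))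
    (lt_of_le_of_lt (aux_finrank_span_range_le v₁) h₁lt)
  obtain ⟨H₂, hH₂, hW₂⟩ := aux_exists_hyperplane (Submodule.span L (Set.range v₂))
    (lt_of_le_of_lt (aux_finrank_span_range_le v₂) h₂lt)
  refine ⟨H₁, H₂, hH₁, hH₂, le_antisymm ?_ (sup_le inf_le_left inf_le_left)⟩
  have h₁ : Submodule.span Fq (Set.range v₁) ≤ U ⊓ H₁.restrictScalars Fq := by
    rw [le_inf_iff]
    constructor
    · exact Submodule.span_le.2 (by rintro x ⟨i, rfl⟩; exact hvU _)
    · exact Submodule.span_le.2 fun x hx => hW₁ (Submodule.subset_span hx)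
  have h₂ : Submodule.span Fq (Set.range v₂) ≤ U ⊓ H₂.restrictScalars Fq := by
    rw [le_inf_iff]
    constructor
    · exact Submodule.span_le.2 (by rintro x ⟨i, rfl⟩; exact hvU _)
    · exact Submodule.span_le.2 fun x hx => hW₂ (Submodule.subset_span hx)
  calc U = Submodule.span Fq (Set.range v) := hvspan.symm
    _ ≤ Submodule.span Fq (Set.range v₁ ∪ Set.range v₂) :=
        Submodule.span_le.2 (by rintro x ⟨j, rfl⟩; exact Submodule.subset_span (hcover j))
    _ = Submodule.span Fq (Set.range v₁) ⊔ Submodule.span Fq (Set.range v₂) :=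
        Submodule.span_union _ _
    _ ≤ (U ⊓ H₁.restrictScalars Fq) ⊔ (U ⊓ H₂.restrictScalars Fq) := sup_le_sup h₁ h₂
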